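/- For vectors u₁, u₂ ∈ ℝ^m and v₁, v₂ ∈ ℝ^n, the nuclear norm (sum of singular values) of u₁v₁ᵀ + u₂v₂ᵀ equals √(‖u₁‖²‖v₁‖² + ‖u₂‖²‖v₂‖² + 2‖u₁‖‖v₁‖‖u₂‖‖v₂‖ cos(θ_u − θ_v)), where θ_u, θ_v ∈ [0,π] are the angles between u₁,u₂ and between v₁,v₂ respectively. -/

import Mathlib

open Matrix BigOperators

/-- Euclidean 2-norm of a vector in `ℝ^n`. -/
noncomputable def euclNorm {n : ℕ} (x : Fin n → ℝ) : ℝ := Real.sqrt (∑ i, x i ^ 2)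

/-- Frobenius norm of a real matrix. -/
noncomputable def frobNorm {m n : ℕ} (M : Matrix (Fin m) (Fin n) ℝ) : ℝ :=
  Real.sqrt (∑ i, ∑ j, M i j ^ 2)

/-- The singular values of a real `m × n` matrix: square roots of the eigenvalues of `Aᵀ A`
(for real matrices `Aᴴ = Aᵀ`). -/
noncomputable def singVal {m n : ℕ} (A : Matrix (Fin m) (Fin n) ℝ) (i : Fin n) : ℝ :=
  Real.sqrt ((show (Aᵀ * A).IsHermitian by
    simpa using Matrix.isHermitian_conjTranspose_mul_self A).eigenvalues i)

/-- Nuclear (trace) norm: the sum of the singular values with multiplicity. -/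
noncomputable def nuclearNorm {m n : ℕ} (A : Matrix (Fin m) (Fin n) ℝ) : ℝ :=
  ∑ i, singVal A i

/-- Spectral norm (operator 2-norm): sup of `‖A x‖₂` over Euclidean unit vectors `x`. -/
noncomputable def specNorm {m n : ℕ} (A : Matrix (Fin m) (Fin n) ℝ) : ℝ :=
  sSup {c | ∃ x : Fin n → ℝ, euclNorm x = 1 ∧ c = euclNorm (A.mulVec x)}

/-- Smallest singular value of a real `m × n` matrix. -/
noncomputable def sigmaMin {m n : ℕ} (A : Matrix (Fin m) (Fin n) ℝ) : ℝ :=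
  Real.sqrt (⨅ i : Fin n, (show (Aᵀ * A).IsHermitian by
    simpa using Matrix.isHermitian_conjTranspose_mul_self A).eigenvalues i)

open Matrix

lemma my_trace_eigs {k : ℕ} (B : Matrix (Fin k) (Fin k) ℝ) (hB : B.IsHermitian) :
    (∑ i, hB.eigenvalues i) = B.trace ∧ (∑ i, hB.eigenvalues i ^ 2) = (B * B).trace := by
  classical
  set W : Matrix (Fin k) (Fin k) ℝ := (hB.eigenvectorUnitary : Matrix (Fin k) (Fin k) ℝ) with hWdef
  set D : Matrix (Fin k) (Fin k) ℝ := diagonal (RCLike.ofReal ∘ hB.eigenvalues) with hDdef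
  have hW1 : star W * W = 1 := ((Unitary.mem_iff).mp hB.eigenvectorUnitary.prop).1
  have hsp : B = W * D * star W := hB.spectral_theorem
  have hd : ∀ i, (RCLike.ofReal ∘ hB.eigenvalues) i = hB.eigenvalues i := by
    intro i; simp [RCLike.ofReal_real_eq_id]
  have htrD : D.trace = ∑ i, hB.eigenvalues i := by
    rw [hDdef, trace_diagonal]; exact Finset.sum_congr rfl fun i _ => hd i
  constructor
  · have h1 : B.trace = (W * D * star W).trace := congrArg Matrix.trace hsp
    rw [h1, trace_mul_cycle, hW1, one_mul, htrD]
  · have hBB : B * B = W * (D * D) * star W := by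
      conv_lhs => rw [hsp]
      have h3 : star W * (W * (D * star W)) = D * star W := by
        rw [← mul_assoc, hW1, one_mul]
      simp only [mul_assoc, h3]
    rw [hBB, trace_mul_cycle, hW1, one_mul, hDdef,
      diagonal_mul_diagonal, trace_diagonal]
    refine Finset.sum_congr rfl fun i _ => ?_
    simp [hd i, pow_two]

lemma my_sum_sqrt {k : ℕ} (e : Fin k → ℝ) (he : ∀ i, 0 ≤ e i)
    (hcard : Fintype.card {i // e i ≠ 0} ≤ 2) :
    ∑ i, Real.sqrt (e i)
      = Real.sqrt ((∑ i, e i) + 2 * Real.sqrt (((∑ i, e i) ^ 2 - ∑ i, e i ^ 2) / 2)) := by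
  classical
  set s := Finset.univ.filter (fun i => e i ≠ 0) with hs
  have hcard' : s.card ≤ 2 := by
    have h := (Fintype.card_subtype (fun i => e i ≠ 0)).symm
    rw [hs]
    omega
  have hres : ∀ f : ℝ → ℝ, f 0 = 0 → ∑ i, f (e i) = ∑ i ∈ s, f (e i) := by
    intro f hf
    refine (Finset.sum_subset (Finset.subset_univ s) fun x _ hx => ?_).symm
    simp only [hs, Finset.mem_filter, Finset.mem_univ, true_and, not_not] at hx
    rw [hx, hf]
  rw [hres Real.sqrt Real.sqrt_zero, hres (fun x => x) rfl, hres (fun x => x ^ 2) (by norm_num)]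
  interval_cases hc : s.card
  · rw [Finset.card_eq_zero] at hc
    simp [hc]
  · obtain ⟨a, ha⟩ := Finset.card_eq_one.mp hc
    rw [ha]; simp
  · obtain ⟨a, b, hab, hab2⟩ := Finset.card_eq_two.mp hc
    rw [hab2, Finset.sum_pair hab, Finset.sum_pair hab, Finset.sum_pair hab]
    have h1 : ((e a + e b) ^ 2 - (e a ^ 2 + e b ^ 2)) / 2 = e a * e b := by ring
    rw [h1, Real.sqrt_mul (he a)]
    have h2 : e a + e b + 2 * (Real.sqrt (e a) * Real.sqrt (e b))
        = (Real.sqrt (e a) + Real.sqrt (e b)) ^ 2 := by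
      have ha := Real.sq_sqrt (he a)
      have hb := Real.sq_sqrt (he b)
      nlinarith [ha, hb]
    rw [h2, Real.sqrt_sq (by positivity)]

/-- Nuclear norm of a rank-(at most)-2 matrix `u₁v₁ᵀ + u₂v₂ᵀ`:
`θu, θv ∈ [0, π]` are the angles between `u₁, u₂` and `v₁, v₂`. -/
theorem nuclearNorm_rank_two {m n : ℕ} (u₁ u₂ : Fin m → ℝ) (v₁ v₂ : Fin n → ℝ)
    (θu θv : ℝ) (hθu : θu ∈ Set.Icc 0 Real.pi) (hθv : θv ∈ Set.Icc 0 Real.pi)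
    (hcu : euclNorm u₁ * euclNorm u₂ * Real.cos θu = ∑ i, u₁ i * u₂ i)
    (hcv : euclNorm v₁ * euclNorm v₂ * Real.cos θv = ∑ j, v₁ j * v₂ j) :
    nuclearNorm (vecMulVec u₁ v₁ + vecMulVec u₂ v₂)
      = Real.sqrt (euclNorm u₁ ^ 2 * euclNorm v₁ ^ 2 + euclNorm u₂ ^ 2 * euclNorm v₂ ^ 2
          + 2 * (euclNorm u₁ * euclNorm v₁ * euclNorm u₂ * euclNorm v₂)
              * Real.cos (θu - θv)) := by
  classical
  set A := vecMulVec u₁ v₁ + vecMulVec u₂ v₂ with hAdef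
  set hB := Matrix.isHermitian_conjTranspose_mul_self A with hBdef
  -- nonnegativity of eigenvalues
  have he : ∀ i, 0 ≤ hB.eigenvalues i := by
    intro i
    exact (Matrix.posSemidef_conjTranspose_mul_self A).eigenvalues_nonneg i
  -- factorization A = P * Q
  set P : Matrix (Fin m) (Fin 2) ℝ := Matrix.of (fun i k => ![u₁, u₂] k i) with hPdef
  set Q : Matrix (Fin 2) (Fin n) ℝ := Matrix.of ![v₁, v₂] with hQdef
  have hPQ : A = P * Q := by
    ext i j
    simp [hAdef, Matrix.mul_apply, Fin.sum_univ_two, Matrix.vecMulVec_apply, hPdef, hQdef]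
  -- rank bound
  have hrank : Fintype.card {i // hB.eigenvalues i ≠ 0} ≤ 2 := by
    rw [← hB.rank_eq_card_non_zero_eigs, Matrix.rank_conjTranspose_mul_self, hPQ]
    calc (P * Q).rank ≤ Q.rank := Matrix.rank_mul_le_right P Q
      _ ≤ Fintype.card (Fin 2) := Matrix.rank_le_card_height Q
      _ = 2 := by simp
  -- dot products
  set s11 := ∑ i, u₁ i * u₁ i with hs11
  set s12 := ∑ i, u₁ i * u₂ i with hs12
  set s22 := ∑ i, u₂ i * u₂ i with hs22
  set t11 := ∑ j, v₁ j * v₁ j with ht11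
  set t12 := ∑ j, v₁ j * v₂ j with ht12
  set t22 := ∑ j, v₂ j * v₂ j with ht22
  have hG : Pᴴ * P = !![s11, s12; s12, s22] := by
    ext i j
    fin_cases i <;> fin_cases j <;>
      simp [Matrix.mul_apply, Matrix.conjTranspose_apply, hPdef, hs11, hs12, hs22, mul_comm]
  have hH : Q * Qᴴ = !![t11, t12; t12, t22] := by
    ext i j
    fin_cases i <;> fin_cases j <;>
      simp [Matrix.mul_apply, Matrix.conjTranspose_apply, hQdef, ht11, ht12, ht22, mul_comm, Matrix.vecHead, Matrix.vecTail]
  -- traces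
  have htr1 : (Aᴴ * A).trace = ((Pᴴ * P) * (Q * Qᴴ)).trace := by
    rw [hPQ, Matrix.conjTranspose_mul]
    have h1 : Qᴴ * Pᴴ * (P * Q) = Qᴴ * ((Pᴴ * P) * Q) := by simp only [Matrix.mul_assoc]
    rw [h1, Matrix.trace_mul_comm]
    simp only [Matrix.mul_assoc]
  have htr2 : ((Aᴴ * A) * (Aᴴ * A)).trace
      = (((Pᴴ * P) * (Q * Qᴴ)) * ((Pᴴ * P) * (Q * Qᴴ))).trace := by
    rw [hPQ, Matrix.conjTranspose_mul]
    have h1 : Qᴴ * Pᴴ * (P * Q) * (Qᴴ * Pᴴ * (P * Q))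
        = Qᴴ * ((Pᴴ * P) * (Q * Qᴴ) * ((Pᴴ * P) * Q)) := by simp only [Matrix.mul_assoc]
    rw [h1, Matrix.trace_mul_comm]
    simp only [Matrix.mul_assoc]
  have hval1 : (Aᴴ * A).trace = s11 * t11 + 2 * (s12 * t12) + s22 * t22 := by
    rw [htr1, hG, hH, Matrix.mul_fin_two, Matrix.trace_fin_two_of]
    ring
  have hval2 : ((Aᴴ * A) * (Aᴴ * A)).trace
      = (s11 * t11 + s12 * t12) ^ 2 + (s12 * t12 + s22 * t22) ^ 2
        + 2 * ((s11 * t12 + s12 * t22) * (s12 * t11 + s22 * t12)) := by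
    rw [htr2, hG, hH, Matrix.mul_fin_two, Matrix.mul_fin_two, Matrix.trace_fin_two_of]
    ring
  -- eigenvalue sums
  obtain ⟨hsum1, hsum2⟩ := my_trace_eigs (Aᴴ * A) hB
  -- scalar abbreviations
  set a1 := euclNorm u₁ with ha1
  set a2 := euclNorm u₂ with ha2
  set b1 := euclNorm v₁ with hb1
  set b2 := euclNorm v₂ with hb2
  have ha1sq : s11 = a1 ^ 2 := by
    rw [ha1, euclNorm, Real.sq_sqrt (by positivity), hs11]
    exact Finset.sum_congr rfl fun i _ => (sq (u₁ i)).symm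
  have ha2sq : s22 = a2 ^ 2 := by
    rw [ha2, euclNorm, Real.sq_sqrt (by positivity), hs22]
    exact Finset.sum_congr rfl fun i _ => (sq (u₂ i)).symm
  have hb1sq : t11 = b1 ^ 2 := by
    rw [hb1, euclNorm, Real.sq_sqrt (by positivity), ht11]
    exact Finset.sum_congr rfl fun i _ => (sq (v₁ i)).symm
  have hb2sq : t22 = b2 ^ 2 := by
    rw [hb2, euclNorm, Real.sq_sqrt (by positivity), ht22]
    exact Finset.sum_congr rfl fun i _ => (sq (v₂ i)).symm
  have hp : s12 = a1 * a2 * Real.cos θu := hcu.symm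
  have hq : t12 = b1 * b2 * Real.cos θv := hcv.symm
  have ha1n : 0 ≤ a1 := Real.sqrt_nonneg _
  have ha2n : 0 ≤ a2 := Real.sqrt_nonneg _
  have hb1n : 0 ≤ b1 := Real.sqrt_nonneg _
  have hb2n : 0 ≤ b2 := Real.sqrt_nonneg _
  have hsun : 0 ≤ Real.sin θu := Real.sin_nonneg_of_nonneg_of_le_pi hθu.1 hθu.2
  have hsvn : 0 ≤ Real.sin θv := Real.sin_nonneg_of_nonneg_of_le_pi hθv.1 hθv.2
  -- main computation
  have hmain : nuclearNorm A = ∑ i, Real.sqrt (hB.eigenvalues i) := rfl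
  rw [hmain, my_sum_sqrt _ he hrank, hsum1, hsum2, hval1, hval2]
  have hkey : ((s11 * t11 + 2 * (s12 * t12) + s22 * t22) ^ 2
        - ((s11 * t11 + s12 * t12) ^ 2 + (s12 * t12 + s22 * t22) ^ 2
        + 2 * ((s11 * t12 + s12 * t22) * (s12 * t11 + s22 * t12)))) / 2
      = (a1 * a2 * Real.sin θu * (b1 * b2 * Real.sin θv)) ^ 2 := by
    rw [ha1sq, ha2sq, hb1sq, hb2sq, hp, hq,
      show (a1 * a2 * Real.sin θu * (b1 * b2 * Real.sin θv)) ^ 2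
          = a1 ^ 2 * a2 ^ 2 * b1 ^ 2 * b2 ^ 2 * Real.sin θu ^ 2 * Real.sin θv ^ 2 from by ring,
      Real.sin_sq θu, Real.sin_sq θv]
    ring
  rw [hkey, Real.sqrt_sq (by positivity)]
  congr 1
  rw [ha1sq, ha2sq, hb1sq, hb2sq, hp, hq, Real.cos_sub]
  ring
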